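/- Let A be an associative ring of prime characteristic p. If x ∈ [A,A], then x^p ∈ [A,A]. Consequently the sets T_i(A) = {x ∈ A : x^{p^i} ∈ [A,A]} form an ascending chain [A,A] = T_0(A) ⊆ T_1(A) ⊆ T_2(A) ⊆ …. -/

import Mathlib

open Finset

namespace KuelAux

variable {A : Type*} [Ring A]

/-- The commutator subgroup `[A,A]`. -/
def comms (A : Type*) [Ring A] : AddSubgroup A :=
  AddSubgroup.closure {z : A | ∃ a b : A, z = a * b - b * a}

/-- Projection to `A/[A,A]`. -/
def km (A : Type*) [Ring A] : A →+ A ⧸ comms A := QuotientAddGroup.mk' (comms A)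

lemma km_mul_comm (a b : A) : km A (a * b) = km A (b * a) := by
  have h : a * b - b * a ∈ comms A := AddSubgroup.subset_closure ⟨a, b, rfl⟩
  exact (QuotientAddGroup.eq_iff_sub_mem).mpr h

lemma km_eq_zero_iff (a : A) : km A a = 0 ↔ a ∈ comms A :=
  QuotientAddGroup.eq_zero_iff a

lemma km_prod_rotate (l : List A) : km A ((l.rotate 1).prod) = km A l.prod := by
  cases l with
  | nil => simp
  | cons a t =>
      rw [List.rotate_cons_succ, List.rotate_zero, List.prod_append, List.prod_cons,
        List.prod_cons, List.prod_nil, mul_one, km_mul_comm]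

lemma km_nsmul (p : ℕ) [CharP A p] (a : A) : p • km A a = 0 := by
  rw [← map_nsmul, nsmul_eq_mul, CharP.cast_eq_zero, zero_mul, map_zero]

/-! ### Words -/

/-- The product of the word `f` with letters `x` (for `true`) and `y`. -/
def wprod (x y : A) {n : ℕ} (f : Fin n → Bool) : A :=
  (List.ofFn fun i => bif f i then x else y).prod

lemma expand (x y : A) (n : ℕ) :
    (x + y) ^ n = ∑ f : Fin n → Bool, wprod x y f := by
  induction n with
  | zero => simp [wprod]
  | succ n ih =>
      rw [pow_succ', ih]
      have hcons : ∀ (b : Bool) (f : Fin n → Bool),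
          wprod x y (Fin.cons b f : Fin (n+1) → Bool) = (bif b then x else y) * wprod x y f := by
        intro b f
        unfold wprod
        rw [List.ofFn_succ, List.prod_cons]
        simp [Fin.cons_zero, Fin.cons_succ]
      rw [← Equiv.sum_comp (Fin.consEquiv (fun _ : Fin (n + 1) => Bool))
        (wprod x y (n := n + 1)), Fintype.sum_prod_type, Fintype.sum_bool]
      show (x + y) * ∑ f : Fin n → Bool, wprod x y f
          = (∑ f : Fin n → Bool, wprod x y (Fin.cons true f))
            + ∑ f : Fin n → Bool, wprod x y (Fin.cons false f)
      simp only [hcons, cond_true, cond_false]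
      rw [← mul_sum, ← mul_sum, add_mul]

/-- Rotation of words. -/
def rot {p : ℕ} [NeZero p] (f : Fin p → Bool) : Fin p → Bool := fun i => f (i + 1)

variable {p : ℕ} [NeZero p]

open Fin.NatCast

lemma rot_iter (k : ℕ) (f : Fin p → Bool) (i : Fin p) :
    (rot^[k] f) i = f (i + (k : Fin p)) := by
  induction k generalizing f with
  | zero => simp
  | succ k ih =>
      rw [Function.iterate_succ_apply, ih (rot f)]
      show f (i + (k : Fin p) + 1) = _
      rw [Nat.cast_add, Nat.cast_one, add_assoc]

lemma rot_p (f : Fin p → Bool) : rot^[p] f = f := by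
  funext i
  rw [rot_iter, Fin.natCast_self, add_zero]

lemma rot_mul_p (q : ℕ) (f : Fin p → Bool) : rot^[p * q] f = f := by
  induction q with
  | zero => simp
  | succ q ih =>
      rw [Nat.mul_succ, Function.iterate_add_apply, rot_p, ih]

lemma rot_mod (k : ℕ) (f : Fin p → Bool) : rot^[k] f = rot^[k % p] f := by
  conv_lhs => rw [← Nat.div_add_mod k p]
  rw [Nat.add_comm, Function.iterate_add_apply, rot_mul_p]

lemma const_of_rot_fix {f : Fin p → Bool} (h : rot f = f) (i : Fin p) : f i = f 0 := by
  have key : ∀ k : ℕ, f (k : Fin p) = f 0 := by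
    intro k
    induction k with
    | zero => simp
    | succ k ih =>
        rw [Nat.cast_add, Nat.cast_one]
        have := congrFun h (k : Fin p)
        simp only [rot] at this
        rw [← this] at ih
        exact ih
  rw [← key i.val, Fin.cast_val_eq_self]

lemma rot_fix_of_d {f : Fin p → Bool} (hp : p.Prime) {d : ℕ} (hd0 : 0 < d) (hdp : d < p)
    (h : rot^[d] f = f) : rot f = f := by
  have hcop : Nat.Coprime d p := (Nat.Prime.coprime_iff_not_dvd hp).mpr
    (fun hdvd => absurd (Nat.le_of_dvd hd0 hdvd) (not_le.mpr hdp)) |>.symm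
  obtain ⟨m, -, hm⟩ := Nat.exists_mul_mod_eq_one_of_coprime hcop hp.one_lt
  have h2 : rot^[d * m] f = f := by
    rw [Function.iterate_mul]
    exact Function.iterate_fixed h m
  rw [rot_mod, hm] at h2
  exact h2

lemma rot_iter_inj {f : Fin p → Bool} (hp : p.Prime) (hf : rot f ≠ f) :
    ∀ a b, a < p → b < p → rot^[a] f = rot^[b] f → a = b := by
  have key : ∀ a b, a < b → b < p → rot^[a] f = rot^[b] f → False := by
    intro a b hab hbp h
    have h2 : rot^[p - a] (rot^[a] f) = rot^[p - a] (rot^[b] f) := by rw [h]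
    rw [← Function.iterate_add_apply, ← Function.iterate_add_apply] at h2
    have e1 : p - a + a = p := by omega
    have e2 : p - a + b = p + (b - a) := by omega
    rw [e1, e2, rot_p] at h2
    rw [Function.iterate_add_apply, rot_p] at h2
    exact hf (rot_fix_of_d hp (by omega) (by omega) h2.symm)
  intro a b ha hb h
  rcases lt_trichotomy a b with h1 | h1 | h1
  · exact absurd (key a b h1 hb h) (fun x => x)
  · exact h1
  · exact absurd (key b a h1 ha h.symm) (fun x => x)


lemma km_wprod_rot (x y : A) (f : Fin p → Bool) :
    km A (wprod x y (rot f)) = km A (wprod x y f) := by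
  have hl : (List.ofFn fun i => bif (rot f) i then x else y)
      = (List.ofFn fun i => bif f i then x else y).rotate 1 := by
    apply List.ext_getElem
    · simp
    · intro i h1 h2
      rw [List.getElem_ofFn, List.getElem_rotate, List.getElem_ofFn]
      simp only [List.length_ofFn] at h1 h2 ⊢
      have harg : (⟨i, h1⟩ : Fin p) + 1 = (⟨(i + 1) % p, Nat.mod_lt _ (NeZero.pos p)⟩ : Fin p) := by
        apply Fin.ext
        show (i + (1 : Fin p).val) % p = (i + 1) % p
        rw [Fin.val_one']
        conv_rhs => rw [Nat.add_mod, Nat.mod_eq_of_lt h1]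
      exact congrArg (fun t : Fin p => bif f t then x else y) harg
  rw [wprod, wprod, hl, km_prod_rotate]

lemma km_wprod_rot_iter (x y : A) (k : ℕ) (f : Fin p → Bool) :
    km A (wprod x y (rot^[k] f)) = km A (wprod x y f) := by
  induction k with
  | zero => rfl
  | succ k ih => rw [Function.iterate_succ_apply', km_wprod_rot, ih]

lemma frob (hp : p.Prime) [CharP A p] (x y : A) :
    km A ((x + y) ^ p) = km A (x ^ p) + km A (y ^ p) := by
  classical
  rw [expand, map_sum]
  letI R : Setoid (Fin p → Bool) :=
    ⟨fun f g => ∃ k, rot^[k] f = g,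
      ⟨fun f => ⟨0, rfl⟩,
       by
        rintro f g ⟨k, rfl⟩
        refine ⟨p - k % p, ?_⟩
        rw [← Function.iterate_add_apply, rot_mod]
        have h1 : k % p < p := Nat.mod_lt _ (NeZero.pos p)
        have h1' : k % p ≤ k := Nat.mod_le k p
        have h2 : (p - k % p + k) % p = 0 := by
          have h3 : p - k % p + k = p + (k - k % p) := by omega
          have h4 : k - k % p = p * (k / p) := by
            have := Nat.div_add_mod k p
            omega
          rw [h3, Nat.add_mod_left, h4, Nat.mul_mod_right]
        rw [h2]
        rfl,
       by
        rintro f g h ⟨k, rfl⟩ ⟨l, rfl⟩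
        exact ⟨l + k, (Function.iterate_add_apply _ _ _ _)⟩⟩⟩
  haveI : DecidableRel R.r := fun f g => Classical.dec _
  rw [← Finset.sum_fiberwise Finset.univ (Quotient.mk R) (fun f => km A (wprod x y f))]
  set ct : Fin p → Bool := fun _ => true with hct
  set cf : Fin p → Bool := fun _ => false with hcf
  have hrotct : rot ct = ct := rfl
  have hrotcf : rot cf = cf := rfl
  have hconst_fiber : ∀ c : Fin p → Bool, rot c = c →
      Finset.univ.filter (fun f => Quotient.mk R f = Quotient.mk R c) = {c} := by
    intro c hc
    apply Finset.ext
    intro f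
    simp only [Finset.mem_filter, Finset.mem_univ, true_and, Finset.mem_singleton]
    constructor
    · intro h
      obtain ⟨m, hm⟩ := R.symm (Quotient.exact h)
      rw [Function.iterate_fixed hc] at hm
      exact hm.symm
    · rintro rfl; rfl
  have hne : (Quotient.mk R ct : Quotient R) ≠ Quotient.mk R cf := by
    intro h
    obtain ⟨k, hk⟩ := Quotient.exact h
    rw [Function.iterate_fixed hrotct] at hk
    simpa using congrFun hk ⟨0, NeZero.pos p⟩
  have hzero : ∀ j : Quotient R, j ≠ Quotient.mk R ct → j ≠ Quotient.mk R cf →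
      ∑ f ∈ Finset.univ.filter (fun f => Quotient.mk R f = j), km A (wprod x y f) = 0 := by
    intro j hjt hjf
    set f0 := j.out with hf0
    have hout : Quotient.mk R f0 = j := Quotient.out_eq j
    have hfix : rot f0 ≠ f0 := by
      intro hc
      rcases Bool.eq_false_or_eq_true (f0 0) with h0 | h0
      · apply hjt
        rw [← hout]
        congr 1
        funext i
        rw [const_of_rot_fix hc i, h0]
      · apply hjf
        rw [← hout]
        congr 1
        funext i
        rw [const_of_rot_fix hc i, h0]
    have hfiber : Finset.univ.filter (fun f => Quotient.mk R f = j)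
        = (Finset.range p).image (fun k => rot^[k] f0) := by
      apply Finset.ext
      intro f
      simp only [Finset.mem_filter, Finset.mem_univ, true_and, Finset.mem_image,
        Finset.mem_range]
      constructor
      · intro h
        obtain ⟨m, hm⟩ := R.symm (Quotient.exact (h.trans hout.symm))
        exact ⟨m % p, Nat.mod_lt _ (NeZero.pos p), by rw [← rot_mod, hm]⟩
      · rintro ⟨k, hk, rfl⟩
        rw [← hout]
        exact Quotient.sound (R.symm ⟨k, rfl⟩)
    rw [hfiber, Finset.sum_image (by
      intro a ha b hb hab
      exact rot_iter_inj hp hfix a b (Finset.mem_range.mp ha) (Finset.mem_range.mp hb) hab)]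
    have : ∀ k ∈ Finset.range p, km A (wprod x y (rot^[k] f0)) = km A (wprod x y f0) :=
      fun k _ => km_wprod_rot_iter x y k f0
    rw [Finset.sum_congr rfl this, Finset.sum_const, Finset.card_range, km_nsmul p]
  have hsplit : ∑ j : Quotient R,
      ∑ f ∈ Finset.univ.filter (fun f => Quotient.mk R f = j), km A (wprod x y f)
      = ∑ j ∈ ({Quotient.mk R ct, Quotient.mk R cf} : Finset (Quotient R)),
        ∑ f ∈ Finset.univ.filter (fun f => Quotient.mk R f = j), km A (wprod x y f) := by
    refine (Finset.sum_subset (Finset.subset_univ _) ?_).symm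
    intro j _ hj
    simp only [Finset.mem_insert, Finset.mem_singleton, not_or] at hj
    exact hzero j hj.1 hj.2
  rw [hsplit, Finset.sum_pair hne, hconst_fiber ct hrotct, hconst_fiber cf hrotcf,
    Finset.sum_singleton, Finset.sum_singleton]
  have hwt : wprod x y ct = x ^ p := by
    rw [wprod]
    have : (List.ofFn fun i : Fin p => bif ct i then x else y) = List.replicate p x := by
      simp [hct]
    simp only [this, List.prod_replicate]
  have hwf : wprod x y cf = y ^ p := by
    rw [wprod]
    have : (List.ofFn fun i : Fin p => bif cf i then x else y) = List.replicate p y := by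
      simp [hcf]
    simp only [this, List.prod_replicate]
  rw [hwt, hwf]


lemma km_neg_pow (hp : p.Prime) [CharP A p] (z : A) :
    km A ((-z) ^ p) = - km A (z ^ p) := by
  have h := frob (A := A) hp (-z) z
  rw [neg_add_cancel, zero_pow hp.ne_zero, map_zero] at h
  exact eq_neg_of_add_eq_zero_left h.symm

lemma pow_succ_mul (a b : A) : ∀ n : ℕ, (a * b) ^ (n + 1) = a * ((b * a) ^ n * b)
  | 0 => by simp
  | n + 1 => by
      rw [pow_succ, pow_succ_mul a b n, pow_succ]
      noncomm_ring

omit [NeZero p] in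
lemma km_pow_mul_comm (hp : p.Prime) (a b : A) :
    km A ((a * b) ^ p) = km A ((b * a) ^ p) := by
  obtain ⟨n, hn⟩ : ∃ n, p = n + 1 := ⟨p - 1, by have := hp.pos; omega⟩
  rw [hn, pow_succ_mul, km_mul_comm, mul_assoc, ← pow_succ]

lemma pow_mem (hp : p.Prime) [CharP A p] {x : A} (hx : x ∈ comms A) :
    x ^ p ∈ comms A := by
  rw [← km_eq_zero_iff]
  refine AddSubgroup.closure_induction ?_ ?_ ?_ ?_ hx
  · rintro z ⟨a, b, rfl⟩
    rw [sub_eq_add_neg, frob hp, km_neg_pow hp, km_pow_mul_comm hp a b, add_neg_cancel]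
  · rw [zero_pow hp.ne_zero, map_zero]
  · intro u v _ _ hu hv
    rw [frob hp, hu, hv, add_zero]
  · intro u _ hu
    rw [km_neg_pow hp, hu, neg_zero]

end KuelAux

theorem kuelshammer_chain (A : Type*) [Ring A] (p : ℕ)
    [Fact p.Prime] [CharP A p] :
    (∀ x ∈ AddSubgroup.closure {z : A | ∃ a b : A, z = a * b - b * a},
        x ^ p ∈ AddSubgroup.closure {z : A | ∃ a b : A, z = a * b - b * a}) ∧
      {x : A | x ^ p ^ 0 ∈ AddSubgroup.closure {z : A | ∃ a b : A, z = a * b - b * a}}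
        = (AddSubgroup.closure {z : A | ∃ a b : A, z = a * b - b * a} : Set A) ∧
      ∀ i : ℕ,
        {x : A | x ^ p ^ i ∈ AddSubgroup.closure {z : A | ∃ a b : A, z = a * b - b * a}} ⊆
        {x : A | x ^ p ^ (i + 1) ∈
          AddSubgroup.closure {z : A | ∃ a b : A, z = a * b - b * a}} := by
  have hp : p.Prime := Fact.out
  haveI : NeZero p := ⟨hp.ne_zero⟩
  refine ⟨fun x hx => KuelAux.pow_mem hp hx, ?_, fun i x hx => ?_⟩
  · ext x
    simp only [Set.mem_setOf_eq, pow_zero, pow_one, SetLike.mem_coe]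
  · simp only [Set.mem_setOf_eq] at hx ⊢
    rw [pow_succ, pow_mul]
    exact KuelAux.pow_mem hp hx
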